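/- Let Γ be the signed graph obtained from a signed cycle C_g^σ by joining one vertex of the cycle to the center of a star K_{1,r} (r ≥ 1) by an edge (with arbitrary signs on the new edges). Then i₋(Γ) = i₋(C_g^σ) + 1 and i₊(Γ) = i₊(C_g^σ) + 1. -/

import Mathlib

open Matrix

/-- A signed graph: a simple graph together with a `±1` sign on each edge. -/
structure SignedGraph (V : Type*) where
  G : SimpleGraph V
  sign : V → V → ℝ
  sign_symm : ∀ u v, sign u v = sign v u
  sign_pm : ∀ u v, G.Adj u v → sign u v = 1 ∨ sign u v = -1

namespace SignedGraph

variable {V : Type*} [Fintype V] [DecidableEq V]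

open scoped Classical

/-- The (signed) adjacency matrix of a signed graph. -/
noncomputable def adjMatrix (Γ : SignedGraph V) : Matrix V V ℝ :=
  fun u v => if Γ.G.Adj u v then Γ.sign u v else 0

lemma isHermitian (Γ : SignedGraph V) : Γ.adjMatrix.IsHermitian := by
  classical
  ext u v
  simp only [adjMatrix, Matrix.conjTranspose_apply, star_trivial]
  by_cases h : Γ.G.Adj v u
  · simp [h, h.symm, Γ.sign_symm v u]
  · have h' : ¬ Γ.G.Adj u v := fun hh => h hh.symm
    simp [h, h']

/-- number of positive eigenvalues (with multiplicity). -/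
noncomputable def posInertia (Γ : SignedGraph V) : ℕ :=
  (Finset.univ.filter fun i => 0 < Γ.isHermitian.eigenvalues i).card

/-- number of negative eigenvalues (with multiplicity). -/
noncomputable def negInertia (Γ : SignedGraph V) : ℕ :=
  (Finset.univ.filter fun i => Γ.isHermitian.eigenvalues i < 0).card

/-- multiplicity of the eigenvalue zero. -/
noncomputable def nullity (Γ : SignedGraph V) : ℕ :=
  (Finset.univ.filter fun i => Γ.isHermitian.eigenvalues i = 0).card

/-- The sign of an (unordered) edge. -/
def edgeSign (Γ : SignedGraph V) : Sym2 V → ℝ :=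
  Sym2.lift ⟨Γ.sign, Γ.sign_symm⟩

/-- A signed graph is balanced if every cycle has positive sign. -/
def Balanced (Γ : SignedGraph V) : Prop :=
  ∀ (v : V) (w : Γ.G.Walk v v), w.IsCycle → (w.edges.map Γ.edgeSign).prod = 1

/-- Switching equivalence of two signed graphs on the same vertex set. -/
def SwitchingEquiv (Γ₁ Γ₂ : SignedGraph V) : Prop :=
  Γ₁.G = Γ₂.G ∧ ∃ θ : V → ℝ, (∀ v, θ v = 1 ∨ θ v = -1) ∧
    ∀ u v, Γ₁.G.Adj u v → Γ₂.sign u v = θ u * Γ₁.sign u v * θ v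

/-- The induced signed subgraph on a finite set of vertices. -/
noncomputable def inducedOn (Γ : SignedGraph V) (s : Finset V) :
    SignedGraph {x // x ∈ s} where
  G := { Adj := fun a b => Γ.G.Adj a b
         symm := ⟨fun a b h => Γ.G.adj_symm h⟩
         loopless := ⟨fun a h => Γ.G.irrefl h⟩ }
  sign := fun a b => Γ.sign a b
  sign_symm := fun a b => Γ.sign_symm a b
  sign_pm := fun a b h => Γ.sign_pm a b h

end SignedGraph



set_option linter.unusedSectionVars false
set_option maxHeartbeats 1000000

section InertiaAux

section Machinery
variable {n : Type*} [Fintype n] [DecidableEq n]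

noncomputable def quad (M : Matrix n n ℝ) (x : n → ℝ) : ℝ := x ⬝ᵥ (M *ᵥ x)

lemma sum_dotProduct' {ι : Type*} (s : Finset ι) (f : ι → n → ℝ) (y : n → ℝ) :
    (∑ i ∈ s, f i) ⬝ᵥ y = ∑ i ∈ s, f i ⬝ᵥ y := by
  simp only [dotProduct, Finset.sum_apply, Finset.sum_mul]
  rw [Finset.sum_comm]

lemma dotProduct_sum' {ι : Type*} (s : Finset ι) (y : n → ℝ) (f : ι → n → ℝ) :
    y ⬝ᵥ (∑ i ∈ s, f i) = ∑ i ∈ s, y ⬝ᵥ f i := by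
  simp only [dotProduct, Finset.sum_apply, Finset.mul_sum]
  rw [Finset.sum_comm]

lemma mulVec_sum' {ι : Type*} (s : Finset ι) (M : Matrix n n ℝ) (f : ι → n → ℝ) :
    M *ᵥ (∑ i ∈ s, f i) = ∑ i ∈ s, M *ᵥ f i := by
  have := map_sum M.mulVecLin f s
  simpa only [mulVecLin_apply] using this

variable (M : Matrix n n ℝ) (hM : M.IsHermitian)

noncomputable def evec : n → (n → ℝ) := fun i => ⇑(hM.eigenvectorBasis i)

lemma evec_dot (i j : n) : evec M hM i ⬝ᵥ evec M hM j = if i = j then 1 else 0 := by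
  by_cases h : i = j
  · subst h
    have h1 := hM.eigenvectorBasis.orthonormal.1 i
    have h2 : (inner ℝ (hM.eigenvectorBasis i) (hM.eigenvectorBasis i) : ℝ) = 1 := by
      rw [real_inner_self_eq_norm_sq, h1]; norm_num
    rw [PiLp.inner_apply] at h2
    simp only [if_pos rfl]
    simpa [RCLike.inner_apply, dotProduct, evec, sq] using h2
  · have h2 : (inner ℝ (hM.eigenvectorBasis i) (hM.eigenvectorBasis j) : ℝ) = 0 :=
      hM.eigenvectorBasis.orthonormal.2 h
    rw [PiLp.inner_apply] at h2
    simp only [h, if_false]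
    simpa [RCLike.inner_apply, dotProduct, evec, mul_comm] using h2

lemma evec_mulVec (i : n) : M *ᵥ evec M hM i = hM.eigenvalues i • evec M hM i :=
  hM.mulVec_eigenvectorBasis i

lemma evec_li : LinearIndependent ℝ (evec M hM) := by
  have := hM.eigenvectorBasis.toBasis.linearIndependent
  exact this.map' (WithLp.linearEquiv 2 ℝ (n → ℝ)).toLinearMap (LinearEquiv.ker _)

lemma quad_sum (c : n → ℝ) :
    quad M (∑ i, c i • evec M hM i) = ∑ i, hM.eigenvalues i * c i ^ 2 := by
  unfold quad
  have hmv : M *ᵥ (∑ i, c i • evec M hM i) = ∑ j, (c j * hM.eigenvalues j) • evec M hM j := by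
    rw [mulVec_sum']
    refine Finset.sum_congr rfl fun j _ => ?_
    rw [mulVec_smul, evec_mulVec M hM, smul_smul]
  rw [hmv, sum_dotProduct']
  refine Finset.sum_congr rfl fun i _ => ?_
  rw [dotProduct_sum', Finset.sum_eq_single i]
  · rw [smul_dotProduct, dotProduct_smul, evec_dot, if_pos rfl]
    simp; ring
  · intro j _ hj
    rw [smul_dotProduct, dotProduct_smul, evec_dot, if_neg (Ne.symm hj)]
    simp
  · simp

lemma sum_subtype_smul (P : n → Prop) [DecidablePred P] (c : {i // P i} → ℝ) :
    (∑ i : {i // P i}, c i • evec M hM i) =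
      ∑ i : n, (if h : P i then c ⟨i, h⟩ else 0) • evec M hM i := by
  classical
  set c' : n → ℝ := fun i => if h : P i then c ⟨i, h⟩ else 0 with hc'
  have h1 : ∑ i : n, c' i • evec M hM i = ∑ i ∈ Finset.univ.filter P, c' i • evec M hM i := by
    refine (Finset.sum_subset (Finset.filter_subset _ _) fun i _ hi => ?_).symm
    rw [Finset.mem_filter, not_and] at hi
    have : ¬ P i := fun h => hi (Finset.mem_univ i) h
    simp [hc', this]
  have h2 : ∑ i ∈ Finset.univ.filter P, c' i • evec M hM i
      = ∑ i : {i // P i}, c' ↑i • evec M hM ↑i := by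
    refine Finset.sum_subtype _ (fun x => ?_) _
    simp
  rw [h1, h2]
  refine Finset.sum_congr rfl fun i _ => ?_
  simp [hc', i.2]
end Machinery

section Machinery2
variable {n : Type*} [Fintype n] [DecidableEq n]
variable (M : Matrix n n ℝ) (hM : M.IsHermitian)

noncomputable def eigSpan (P : n → Prop) : Submodule ℝ (n → ℝ) :=
  Submodule.span ℝ (Set.range fun i : {i // P i} => evec M hM i)

lemma finrank_eigSpan (P : n → Prop) [DecidablePred P] :
    Module.finrank ℝ (eigSpan M hM P) = (Finset.univ.filter P).card := by
  have h := finrank_span_eq_card ((evec_li M hM).comp (Subtype.val : {i // P i} → n)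
    Subtype.val_injective)
  rw [eigSpan]
  simpa [Function.comp_def, Fintype.card_subtype] using h

lemma mem_eigSpan (P : n → Prop) [DecidablePred P] {x : n → ℝ} (hx : x ∈ eigSpan M hM P) :
    ∃ c : n → ℝ, (∀ i, ¬ P i → c i = 0) ∧ x = ∑ i, c i • evec M hM i := by
  rw [eigSpan, Submodule.mem_span_range_iff_exists_fun] at hx
  obtain ⟨c, hc⟩ := hx
  refine ⟨fun i => if h : P i then c ⟨i, h⟩ else 0, fun i hi => by simp [hi], ?_⟩
  rw [← sum_subtype_smul, hc]

lemma quad_pos_eigSpan {x : n → ℝ} (hx : x ∈ eigSpan M hM (fun i => 0 < hM.eigenvalues i))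
    (hx0 : x ≠ 0) : 0 < quad M x := by
  classical
  obtain ⟨c, hc0, rfl⟩ := mem_eigSpan M hM _ hx
  rw [quad_sum]
  refine Finset.sum_pos' (fun i _ => ?_) ?_
  · by_cases h : 0 < hM.eigenvalues i
    · positivity
    · simp [hc0 i h]
  · by_contra hall
    push_neg at hall
    apply hx0
    have : ∀ i, c i = 0 := by
      intro i
      by_cases h : 0 < hM.eigenvalues i
      · have := hall i (Finset.mem_univ i)
        by_contra hci
        have : 0 < hM.eigenvalues i * c i ^ 2 := by positivity
        linarith [hall i (Finset.mem_univ i)]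
      · exact hc0 i h
    refine Finset.sum_eq_zero fun i _ => by simp [this i]

lemma quad_nonpos_eigSpan {x : n → ℝ}
    (hx : x ∈ eigSpan M hM (fun i => ¬ 0 < hM.eigenvalues i)) : quad M x ≤ 0 := by
  classical
  obtain ⟨c, hc0, rfl⟩ := mem_eigSpan M hM _ hx
  rw [quad_sum]
  refine Finset.sum_nonpos fun i _ => ?_
  by_cases h : 0 < hM.eigenvalues i
  · simp [hc0 i (by simpa using h)]
  · push_neg at h
    have : 0 ≤ c i ^ 2 := sq_nonneg _
    nlinarith

lemma quad_neg_eigSpan {x : n → ℝ} (hx : x ∈ eigSpan M hM (fun i => hM.eigenvalues i < 0))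
    (hx0 : x ≠ 0) : quad M x < 0 := by
  classical
  obtain ⟨c, hc0, rfl⟩ := mem_eigSpan M hM _ hx
  rw [quad_sum]
  have : ∀ i ∈ Finset.univ, hM.eigenvalues i * c i ^ 2 ≤ 0 := by
    intro i _
    by_cases h : hM.eigenvalues i < 0
    · nlinarith [sq_nonneg (c i)]
    · simp [hc0 i h]
  refine lt_of_le_of_ne (Finset.sum_nonpos this) ?_
  intro heq
  apply hx0
  have hz : ∀ i ∈ Finset.univ, hM.eigenvalues i * c i ^ 2 = 0 :=
    (Finset.sum_eq_zero_iff_of_nonpos this).mp heq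
  have : ∀ i, c i = 0 := by
    intro i
    by_cases h : hM.eigenvalues i < 0
    · have := hz i (Finset.mem_univ i)
      have hne : hM.eigenvalues i ≠ 0 := ne_of_lt h
      have : c i ^ 2 = 0 := by
        rcases mul_eq_zero.mp this with h' | h'
        · exact absurd h' hne
        · exact h'
      exact pow_eq_zero_iff (by norm_num) |>.mp this
    · exact hc0 i h
  refine Finset.sum_eq_zero fun i _ => by simp [this i]

lemma quad_nonneg_eigSpan {x : n → ℝ}
    (hx : x ∈ eigSpan M hM (fun i => ¬ hM.eigenvalues i < 0)) : 0 ≤ quad M x := by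
  classical
  obtain ⟨c, hc0, rfl⟩ := mem_eigSpan M hM _ hx
  rw [quad_sum]
  refine Finset.sum_nonneg fun i _ => ?_
  by_cases h : hM.eigenvalues i < 0
  · simp [hc0 i (by simpa using h)]
  · push_neg at h
    positivity

lemma finrank_add_finrank_le {W U : Submodule ℝ (n → ℝ)}
    (hWU : ∀ x, x ∈ W → x ∈ U → x = 0) :
    Module.finrank ℝ W + Module.finrank ℝ U ≤ Fintype.card n := by
  have hd : W ⊓ U = ⊥ := by
    rw [Submodule.eq_bot_iff]
    exact fun x hx => hWU x hx.1 hx.2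
  have := Submodule.finrank_sup_add_finrank_inf_eq W U
  rw [hd] at this
  simp only [finrank_bot, add_zero] at this
  rw [← this]
  calc Module.finrank ℝ ↥(W ⊔ U) ≤ Module.finrank ℝ (n → ℝ) := Submodule.finrank_le _
    _ = Fintype.card n := by simp [Module.finrank_pi]

/-- MAIN: characterization of the positive inertia count. -/
theorem posCount_eq_of_subspaces {W U : Submodule ℝ (n → ℝ)}
    (hW : ∀ x ∈ W, x ≠ 0 → 0 < quad M x) (hU : ∀ x ∈ U, quad M x ≤ 0)
    (hdim : Module.finrank ℝ W + Module.finrank ℝ U = Fintype.card n) :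
    (Finset.univ.filter fun i => 0 < hM.eigenvalues i).card = Module.finrank ℝ W := by
  classical
  set Wp := eigSpan M hM (fun i => 0 < hM.eigenvalues i)
  set Wn := eigSpan M hM (fun i => ¬ 0 < hM.eigenvalues i)
  have hWp : Module.finrank ℝ Wp = (Finset.univ.filter fun i => 0 < hM.eigenvalues i).card :=
    finrank_eigSpan M hM _
  have hWn : Module.finrank ℝ Wn = (Finset.univ.filter fun i => ¬ 0 < hM.eigenvalues i).card :=
    finrank_eigSpan M hM _
  have hsplit : (Finset.univ.filter fun i => 0 < hM.eigenvalues i).card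
      + (Finset.univ.filter fun i => ¬ 0 < hM.eigenvalues i).card = Fintype.card n := by
    rw [Finset.card_filter_add_card_filter_not]
    simp
  have h1 : Module.finrank ℝ W + Module.finrank ℝ Wn ≤ Fintype.card n := by
    refine finrank_add_finrank_le fun x hxW hxU => ?_
    by_contra hx0
    exact absurd (hW x hxW hx0) (not_lt.mpr (quad_nonpos_eigSpan M hM hxU))
  have h2 : Module.finrank ℝ Wp + Module.finrank ℝ U ≤ Fintype.card n := by
    refine finrank_add_finrank_le fun x hxW hxU => ?_
    by_contra hx0
    exact absurd (quad_pos_eigSpan M hM hxW hx0) (not_lt.mpr (hU x hxU))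
  omega

/-- MAIN': characterization of the negative inertia count. -/
theorem negCount_eq_of_subspaces {W U : Submodule ℝ (n → ℝ)}
    (hW : ∀ x ∈ W, x ≠ 0 → quad M x < 0) (hU : ∀ x ∈ U, 0 ≤ quad M x)
    (hdim : Module.finrank ℝ W + Module.finrank ℝ U = Fintype.card n) :
    (Finset.univ.filter fun i => hM.eigenvalues i < 0).card = Module.finrank ℝ W := by
  classical
  set Wp := eigSpan M hM (fun i => hM.eigenvalues i < 0)
  set Wn := eigSpan M hM (fun i => ¬ hM.eigenvalues i < 0)
  have hWp : Module.finrank ℝ Wp = (Finset.univ.filter fun i => hM.eigenvalues i < 0).card :=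
    finrank_eigSpan M hM _
  have hWn : Module.finrank ℝ Wn = (Finset.univ.filter fun i => ¬ hM.eigenvalues i < 0).card :=
    finrank_eigSpan M hM _
  have hsplit : (Finset.univ.filter fun i => hM.eigenvalues i < 0).card
      + (Finset.univ.filter fun i => ¬ hM.eigenvalues i < 0).card = Fintype.card n := by
    rw [Finset.card_filter_add_card_filter_not]
    simp
  have h1 : Module.finrank ℝ W + Module.finrank ℝ Wn ≤ Fintype.card n := by
    refine finrank_add_finrank_le fun x hxW hxU => ?_
    by_contra hx0
    exact absurd (hW x hxW hx0) (not_lt.mpr (quad_nonneg_eigSpan M hM hxU))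
  have h2 : Module.finrank ℝ Wp + Module.finrank ℝ U ≤ Fintype.card n := by
    refine finrank_add_finrank_le fun x hxW hxU => ?_
    by_contra hx0
    exact absurd (quad_neg_eigSpan M hM hxW hx0) (not_lt.mpr (hU x hxU))
  omega

end Machinery2

section Abstract
variable {V : Type*} [Fintype V] [DecidableEq V]

noncomputable def embedS (S : Finset V) : ({x // x ∈ S} → ℝ) →ₗ[ℝ] (V → ℝ) where
  toFun x a := if h : a ∈ S then x ⟨a, h⟩ else 0
  map_add' x y := by funext a; by_cases h : a ∈ S <;> simp [h]
  map_smul' c x := by funext a; by_cases h : a ∈ S <;> simp [h]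

noncomputable def resS (S : Finset V) : (V → ℝ) →ₗ[ℝ] ({x // x ∈ S} → ℝ) :=
  LinearMap.funLeft ℝ ℝ Subtype.val

lemma resS_apply (S : Finset V) (y : V → ℝ) (i : {x // x ∈ S}) : resS S y i = y ↑i := rfl

lemma resS_embedS (S : Finset V) (x : {x // x ∈ S} → ℝ) : resS S (embedS S x) = x := by
  funext i
  simp [resS_apply, embedS, i.2]

lemma embedS_notmem (S : Finset V) {a : V} (h : a ∉ S) (x : {x // x ∈ S} → ℝ) :
    embedS S x a = 0 := by simp [embedS, h]

lemma resS_single (S : Finset V) {a : V} (h : a ∉ S) (t : ℝ) :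
    resS S (Pi.single a t) = 0 := by
  funext i
  have : (i : V) ≠ a := fun e => h (e ▸ i.2)
  simp [resS_apply, Pi.single_eq_of_ne this]


/-- auxiliary linear functional. -/
noncomputable def rfunc (L : Finset V) (u y₀ : V) (σ : V → ℝ) (σ₀ : ℝ) : (V → ℝ) →ₗ[ℝ] ℝ :=
  (∑ l ∈ L.erase u, σ l • LinearMap.proj l) + σ₀ • LinearMap.proj y₀

lemma rfunc_apply (L : Finset V) (u y₀ : V) (σ : V → ℝ) (σ₀ : ℝ) (y : V → ℝ) :
    rfunc L u y₀ σ σ₀ y = (∑ l ∈ L.erase u, σ l * y l) + σ₀ * y y₀ := by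
  simp [rfunc]

noncomputable def rawT (L : Finset V) (u y₀ : V) (σ : V → ℝ) (σ₀ : ℝ) :
    (V → ℝ) →ₗ[ℝ] (V → ℝ) :=
  LinearMap.id + (LinearMap.single ℝ (fun _ : V => ℝ) u) ∘ₗ
    ((σ u • (LinearMap.proj u - rfunc L u y₀ σ σ₀)) - LinearMap.proj u)

noncomputable def rawT' (L : Finset V) (u y₀ : V) (σ : V → ℝ) (σ₀ : ℝ) :
    (V → ℝ) →ₗ[ℝ] (V → ℝ) :=
  LinearMap.id + (LinearMap.single ℝ (fun _ : V => ℝ) u) ∘ₗ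
    ((σ u • LinearMap.proj u + rfunc L u y₀ σ σ₀) - LinearMap.proj u)

lemma rawT_apply (L : Finset V) (u y₀ : V) (σ : V → ℝ) (σ₀ : ℝ) (y : V → ℝ) (a : V) :
    rawT L u y₀ σ σ₀ y a = if a = u then σ u * (y u - rfunc L u y₀ σ σ₀ y) else y a := by
  by_cases h : a = u
  · subst h
    simp [rawT, Pi.single_apply, sub_eq_iff_eq_add]
  · simp [rawT, Pi.single_apply, h]

lemma rawT'_apply (L : Finset V) (u y₀ : V) (σ : V → ℝ) (σ₀ : ℝ) (y : V → ℝ) (a : V) :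
    rawT' L u y₀ σ σ₀ y a = if a = u then σ u * y u + rfunc L u y₀ σ σ₀ y else y a := by
  by_cases h : a = u
  · subst h
    simp [rawT', Pi.single_apply]
  · simp [rawT', Pi.single_apply, h]

lemma rfunc_update (L : Finset V) (u y₀ : V) (σ : V → ℝ) (σ₀ : ℝ) (hy₀u : y₀ ≠ u)
    (y : V → ℝ) (v : ℝ) : rfunc L u y₀ σ σ₀ (Function.update y u v) = rfunc L u y₀ σ σ₀ y := by
  simp only [rfunc_apply, Function.update_of_ne hy₀u]
  congr 1
  refine Finset.sum_congr rfl fun l hl => ?_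
  rw [Function.update_of_ne (Finset.ne_of_mem_erase hl)]

lemma rawT_eq_update (L : Finset V) (u y₀ : V) (σ : V → ℝ) (σ₀ : ℝ) (y : V → ℝ) :
    rawT L u y₀ σ σ₀ y = Function.update y u (σ u * (y u - rfunc L u y₀ σ σ₀ y)) := by
  funext a; rw [rawT_apply, Function.update_apply]

lemma rawT'_eq_update (L : Finset V) (u y₀ : V) (σ : V → ℝ) (σ₀ : ℝ) (y : V → ℝ) :
    rawT' L u y₀ σ σ₀ y = Function.update y u (σ u * y u + rfunc L u y₀ σ σ₀ y) := by
  funext a; rw [rawT'_apply, Function.update_apply]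

/-- The coordinate change `x u ↦ σ u * (x u - r x)` fixing all other coordinates. -/
noncomputable def twist (L : Finset V) (u y₀ : V) (σ : V → ℝ) (σ₀ : ℝ)
    (hσu : σ u * σ u = 1) (hy₀u : y₀ ≠ u) : (V → ℝ) ≃ₗ[ℝ] (V → ℝ) := by
  refine LinearEquiv.ofLinear (rawT L u y₀ σ σ₀) (rawT' L u y₀ σ σ₀) ?_ ?_
  · apply LinearMap.ext; intro y
    funext a
    simp only [LinearMap.comp_apply, LinearMap.id_apply]
    rw [rawT_apply]
    by_cases h : a = u
    · rw [if_pos h, h, rawT'_eq_update, rfunc_update L u y₀ σ σ₀ hy₀u, Function.update_self]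
      linear_combination y u * hσu
    · rw [if_neg h, rawT'_apply, if_neg h]
  · apply LinearMap.ext; intro y
    funext a
    simp only [LinearMap.comp_apply, LinearMap.id_apply]
    rw [rawT'_apply]
    by_cases h : a = u
    · rw [if_pos h, h, rawT_eq_update, rfunc_update L u y₀ σ σ₀ hy₀u, Function.update_self]
      linear_combination (y u - rfunc L u y₀ σ σ₀ y) * hσu
    · rw [if_neg h, rawT_apply, if_neg h]

lemma twist_apply (L : Finset V) (u y₀ : V) (σ : V → ℝ) (σ₀ : ℝ)
    (hσu : σ u * σ u = 1) (hy₀u : y₀ ≠ u) (y : V → ℝ) (a : V) :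
    twist L u y₀ σ σ₀ hσu hy₀u y a
      = if a = u then σ u * (y u - ((∑ l ∈ L.erase u, σ l * y l) + σ₀ * y y₀)) else y a := by
  rw [show (twist L u y₀ σ σ₀ hσu hy₀u) y = rawT L u y₀ σ σ₀ y from rfl, rawT_apply, rfunc_apply]

end Abstract

section Fam
variable {V : Type*} [Fintype V] [DecidableEq V]
variable (S : Finset V) (B : Matrix {x // x ∈ S} {x // x ∈ S} ℝ) (hB : B.IsHermitian)
variable (u w : V) (ε : ℝ) (P : {x // x ∈ S} → Prop) [DecidablePred P]

noncomputable def famF : ({i // P i} ⊕ Unit) → (V → ℝ) :=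
  Sum.elim (fun i => embedS S (evec B hB ↑i))
    (fun _ => ((Pi.single u (1:ℝ) : V → ℝ) + ε • (Pi.single w (1:ℝ) : V → ℝ)))

lemma famF_eq (c : ({i // P i} ⊕ Unit) → ℝ) :
    (∑ i, c i • famF S B hB u w ε P i)
      = embedS S (∑ a : {i // P i}, c (Sum.inl a) • evec B hB ↑a)
        + c (Sum.inr ()) • (((Pi.single u (1:ℝ) : V → ℝ) + ε • (Pi.single w (1:ℝ) : V → ℝ))) := by
  rw [Fintype.sum_sum_type, map_sum]
  simp only [famF, Sum.elim_inl, Sum.elim_inr, _root_.map_smul]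
  congr 1
  simp

variable {S B hB u w ε P}

lemma famF_decomp (huS : u ∉ S) (hwS : w ∉ S) (huw : u ≠ w) {z : V → ℝ}
    (hz : z ∈ Submodule.span ℝ (Set.range (famF S B hB u w ε P))) :
    ∃ ξ t, ξ ∈ eigSpan B hB P ∧ resS S z = ξ ∧ z u = t ∧ z w = ε * t ∧
      (ξ = 0 → t = 0 → z = 0) := by
  rw [Submodule.mem_span_range_iff_exists_fun] at hz
  obtain ⟨c, hc⟩ := hz
  rw [famF_eq] at hc
  set ξ := ∑ a : {i // P i}, c (Sum.inl a) • evec B hB ↑a with hξ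
  set t := c (Sum.inr ()) with ht
  refine ⟨ξ, t, ?_, ?_, ?_, ?_, ?_⟩
  · exact Submodule.mem_span_range_iff_exists_fun ℝ |>.mpr ⟨fun a => c (Sum.inl a), rfl⟩
  · rw [← hc]
    simp only [map_add, _root_.map_smul, resS_embedS, resS_single S huS, resS_single S hwS]
    simp
  · rw [← hc]
    simp only [Pi.add_apply, Pi.smul_apply, smul_eq_mul]
    rw [embedS_notmem S huS, Pi.single_eq_same, Pi.single_eq_of_ne huw]
    ring
  · rw [← hc]
    simp only [Pi.add_apply, Pi.smul_apply, smul_eq_mul]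
    rw [embedS_notmem S hwS, Pi.single_eq_same, Pi.single_eq_of_ne (Ne.symm huw)]
    ring
  · intro h1 h2
    rw [← hc, h1, h2]
    simp

lemma famF_li (huS : u ∉ S) (hwS : w ∉ S) (huw : u ≠ w) :
    LinearIndependent ℝ (famF S B hB u w ε P) := by
  rw [Fintype.linearIndependent_iff]
  intro g hg
  rw [famF_eq] at hg
  set ξ := ∑ a : {i // P i}, g (Sum.inl a) • evec B hB ↑a with hξ
  have hres : ξ = 0 := by
    have := congrArg (resS S) hg
    simpa only [map_add, _root_.map_smul, smul_add, resS_embedS, resS_single S huS,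
      resS_single S hwS, smul_zero, add_zero, map_zero] using this
  have hcoefl : ∀ a, g (Sum.inl a) = 0 := by
    have li : LinearIndependent ℝ (fun a : {i // P i} => evec B hB ↑a) :=
      (evec_li B hB).comp Subtype.val Subtype.val_injective
    exact Fintype.linearIndependent_iff.mp li _ hres
  have ht : g (Sum.inr ()) = 0 := by
    have := congrArg (fun f : V → ℝ => f u) hg
    simp only [hres, map_zero, Pi.add_apply, Pi.zero_apply, Pi.smul_apply, smul_eq_mul] at this
    rw [Pi.single_eq_same, Pi.single_eq_of_ne huw] at this
    simpa using this
  rintro (a | ⟨⟩)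
  · exact hcoefl a
  · exact ht

end Fam

section Gam
variable {V : Type*} [Fintype V] [DecidableEq V]
variable (S : Finset V) (B : Matrix {x // x ∈ S} {x // x ∈ S} ℝ) (hB : B.IsHermitian)
variable (u w : V) (L : Finset V) (ε : ℝ) (P : {x // x ∈ S} → Prop) [DecidablePred P]

noncomputable def gamF : ({i // P i} ⊕ ({l // l ∈ L.erase u} ⊕ Unit)) → (V → ℝ) :=
  Sum.elim (fun i => embedS S (evec B hB ↑i))
    (Sum.elim (fun l => (Pi.single (↑l : V) (1:ℝ) : V → ℝ))
      (fun _ => ((Pi.single u (1:ℝ) : V → ℝ) + ε • (Pi.single w (1:ℝ) : V → ℝ))))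

lemma gamF_eq (c : ({i // P i} ⊕ ({l // l ∈ L.erase u} ⊕ Unit)) → ℝ) :
    (∑ i, c i • gamF S B hB u w L ε P i)
      = embedS S (∑ a : {i // P i}, c (Sum.inl a) • evec B hB ↑a)
        + (∑ l : {l // l ∈ L.erase u}, c (Sum.inr (Sum.inl l)) • (Pi.single (↑l : V) (1:ℝ) : V → ℝ))
        + c (Sum.inr (Sum.inr ())) •
            ((Pi.single u (1:ℝ) : V → ℝ) + ε • (Pi.single w (1:ℝ) : V → ℝ)) := by
  rw [Fintype.sum_sum_type, map_sum, Fintype.sum_sum_type]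
  simp only [gamF, Sum.elim_inl, Sum.elim_inr, _root_.map_smul]
  rw [add_assoc]
  congr 2
  simp

variable {S B hB u w L ε P}

lemma gamF_decomp (huS : u ∉ S) (hwS : w ∉ S) (huw : u ≠ w)
    (hLS : ∀ l ∈ L, l ∉ S) (hwL : w ∉ L) {z : V → ℝ}
    (hz : z ∈ Submodule.span ℝ (Set.range (gamF S B hB u w L ε P))) :
    ∃ ξ t, ξ ∈ eigSpan B hB P ∧ resS S z = ξ ∧ z u = t ∧ z w = ε * t := by
  rw [Submodule.mem_span_range_iff_exists_fun] at hz
  obtain ⟨c, hc⟩ := hz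
  rw [gamF_eq] at hc
  set ξ := ∑ a : {i // P i}, c (Sum.inl a) • evec B hB ↑a with hξ
  set t := c (Sum.inr (Sum.inr ())) with ht
  have hsingle_u : ∀ l : {l // l ∈ L.erase u}, (Pi.single (↑l : V) (1:ℝ) : V → ℝ) u = 0 :=
    fun l => Pi.single_eq_of_ne (Ne.symm (Finset.ne_of_mem_erase l.2)) _
  have hsingle_w : ∀ l : {l // l ∈ L.erase u}, (Pi.single (↑l : V) (1:ℝ) : V → ℝ) w = 0 := by
    intro l
    have : (↑l : V) ≠ w := fun e => hwL (e ▸ Finset.mem_of_mem_erase l.2)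
    exact Pi.single_eq_of_ne (Ne.symm this) _
  refine ⟨ξ, t, ?_, ?_, ?_, ?_⟩
  · exact (Submodule.mem_span_range_iff_exists_fun ℝ).mpr ⟨fun a => c (Sum.inl a), rfl⟩
  · rw [← hc]
    have hres_l : ∀ l : {l // l ∈ L.erase u}, resS S (Pi.single (↑l : V) (1:ℝ)) = 0 :=
      fun l => resS_single S (hLS _ (Finset.mem_of_mem_erase l.2)) _
    simp only [map_add, _root_.map_smul, map_sum, resS_embedS, resS_single S huS,
      resS_single S hwS, hres_l, smul_zero, add_zero, Finset.sum_const_zero, smul_add]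
  · rw [← hc]
    simp only [Pi.add_apply, Pi.smul_apply, smul_eq_mul, Finset.sum_apply]
    rw [embedS_notmem S huS, Pi.single_eq_same, Pi.single_eq_of_ne huw]
    rw [Finset.sum_eq_zero (fun l _ => by rw [hsingle_u l, mul_zero])]
    ring
  · rw [← hc]
    simp only [Pi.add_apply, Pi.smul_apply, smul_eq_mul, Finset.sum_apply]
    rw [embedS_notmem S hwS, Pi.single_eq_same, Pi.single_eq_of_ne (Ne.symm huw)]
    rw [Finset.sum_eq_zero (fun l _ => by rw [hsingle_w l, mul_zero])]
    ring

lemma gamF_li (huS : u ∉ S) (hwS : w ∉ S) (huw : u ≠ w)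
    (hLS : ∀ l ∈ L, l ∉ S) (hwL : w ∉ L) :
    LinearIndependent ℝ (gamF S B hB u w L ε P) := by
  rw [Fintype.linearIndependent_iff]
  intro g hg
  rw [gamF_eq] at hg
  set ξ := ∑ a : {i // P i}, g (Sum.inl a) • evec B hB ↑a with hξ
  have hres_l : ∀ l : {l // l ∈ L.erase u}, resS S (Pi.single (↑l : V) (1:ℝ)) = 0 :=
    fun l => resS_single S (hLS _ (Finset.mem_of_mem_erase l.2)) _
  have hres : ξ = 0 := by
    have := congrArg (resS S) hg
    simpa only [map_add, _root_.map_smul, map_sum, smul_add, resS_embedS, resS_single S huS,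
      resS_single S hwS, hres_l, smul_zero, add_zero, Finset.sum_const_zero, map_zero] using this
  have hcoefl : ∀ a, g (Sum.inl a) = 0 := by
    have li : LinearIndependent ℝ (fun a : {i // P i} => evec B hB ↑a) :=
      (evec_li B hB).comp Subtype.val Subtype.val_injective
    exact Fintype.linearIndependent_iff.mp li _ hres
  have hrest : (∑ l : {l // l ∈ L.erase u}, g (Sum.inr (Sum.inl l)) •
        (Pi.single (↑l : V) (1:ℝ) : V → ℝ))
      + g (Sum.inr (Sum.inr ())) •
        ((Pi.single u (1:ℝ) : V → ℝ) + ε • (Pi.single w (1:ℝ) : V → ℝ)) = 0 := by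
    rw [hres, map_zero, zero_add] at hg
    exact hg
  have hcoefm : ∀ l : {l // l ∈ L.erase u}, g (Sum.inr (Sum.inl l)) = 0 := by
    intro l₀
    have := congrArg (fun f : V → ℝ => f ↑l₀) hrest
    simp only [Pi.add_apply, Pi.smul_apply, smul_eq_mul, Finset.sum_apply, Pi.zero_apply] at this
    have hu0 : (Pi.single u (1:ℝ) : V → ℝ) ↑l₀ = 0 :=
      Pi.single_eq_of_ne (Finset.ne_of_mem_erase l₀.2) _
    have hw0 : (Pi.single w (1:ℝ) : V → ℝ) ↑l₀ = 0 := by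
      have : (↑l₀ : V) ≠ w := fun e => hwL (e ▸ Finset.mem_of_mem_erase l₀.2)
      exact Pi.single_eq_of_ne this _
    rw [hu0, hw0, mul_zero, Finset.sum_eq_single l₀] at this
    · rw [Pi.single_eq_same] at this
      simpa using this
    · intro l _ hl
      have : (↑l₀ : V) ≠ ↑l := fun e => hl (Subtype.ext e.symm)
      rw [Pi.single_eq_of_ne this, mul_zero]
    · intro h; exact absurd (Finset.mem_univ l₀) h
  have hcoefr : g (Sum.inr (Sum.inr ())) = 0 := by
    have := congrArg (fun f : V → ℝ => f u) hrest
    simp only [Pi.add_apply, Pi.smul_apply, smul_eq_mul, Finset.sum_apply, Pi.zero_apply] at this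
    have hl0 : ∀ l : {l // l ∈ L.erase u}, (Pi.single (↑l : V) (1:ℝ) : V → ℝ) u = 0 :=
      fun l => Pi.single_eq_of_ne (Ne.symm (Finset.ne_of_mem_erase l.2)) _
    rw [Finset.sum_eq_zero (fun l _ => by rw [hl0 l, mul_zero]), Pi.single_eq_same,
      Pi.single_eq_of_ne huw] at this
    simpa using this
  rintro (a | (l | ⟨⟩))
  · exact hcoefl a
  · exact hcoefm l
  · exact hcoefr
end Gam

section Grand
open Finset
variable {V : Type*} [Fintype V] [DecidableEq V] {S : Finset V}

theorem inertia_step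
    (A : Matrix V V ℝ) (hA : A.IsHermitian)
    (B : Matrix {x // x ∈ S} {x // x ∈ S} ℝ) (hB : B.IsHermitian)
    (u w y₀ : V) (L : Finset V) (σ : V → ℝ) (σ₀ : ℝ)
    (huL : u ∈ L) (hwL : w ∉ L) (huS : u ∉ S) (hwS : w ∉ S) (hy₀ : y₀ ∈ S)
    (hLS : ∀ l ∈ L, l ∉ S)
    (hσu : σ u * σ u = 1)
    (hcard : Fintype.card V = S.card + L.card + 1)
    (hkey : ∀ x : V → ℝ, quad A x
      = quad B (resS S x) + 2 * x w * ((∑ l ∈ L, σ l * x l) + σ₀ * x y₀)) :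
    ((Finset.univ.filter fun i => 0 < hA.eigenvalues i).card
        = (Finset.univ.filter fun i => 0 < hB.eigenvalues i).card + 1)
    ∧ ((Finset.univ.filter fun i => hA.eigenvalues i < 0).card
        = (Finset.univ.filter fun i => hB.eigenvalues i < 0).card + 1) := by
  classical
  have huw : u ≠ w := fun e => hwL (e ▸ huL)
  have hy₀u : y₀ ≠ u := fun e => huS (e ▸ hy₀)
  set φ := twist L u y₀ σ σ₀ hσu hy₀u with hφ
  have hφ_ne : ∀ (y : V → ℝ) (a : V), a ≠ u → φ y a = y a := by
    intro y a ha
    rw [hφ, twist_apply, if_neg ha]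
  have hφres : ∀ y : V → ℝ, resS S (φ y) = resS S y := by
    intro y
    funext i
    rw [resS_apply, resS_apply]
    exact hφ_ne y ↑i (fun e => huS (e ▸ i.2))
  have hφw : ∀ y : V → ℝ, φ y w = y w := fun y => hφ_ne y w (Ne.symm huw)
  have hφcross : ∀ y : V → ℝ,
      (∑ l ∈ L, σ l * φ y l) + σ₀ * φ y y₀ = y u := by
    intro y
    have hsplit : (∑ l ∈ L, σ l * φ y l)
        = σ u * φ y u + ∑ l ∈ L.erase u, σ l * φ y l := by
      rw [← Finset.add_sum_erase L _ huL]
    have herase : ∀ l ∈ L.erase u, σ l * φ y l = σ l * y l := by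
      intro l hl
      rw [hφ_ne y l (Finset.ne_of_mem_erase hl)]
    rw [hsplit, Finset.sum_congr rfl herase, hφ_ne y y₀ hy₀u]
    rw [hφ, twist_apply, if_pos rfl]
    set R := ∑ l ∈ L.erase u, σ l * y l
    linear_combination (y u - R - σ₀ * y y₀) * hσu
  have hq : ∀ y : V → ℝ, quad A (φ y) = quad B (resS S y) + 2 * y w * y u := by
    intro y
    rw [hkey (φ y), hφres y, hφw y, hφcross y]
  have hφ0 : ∀ y : V → ℝ, φ y ≠ 0 → y ≠ 0 := by
    intro y hy hy0
    apply hy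
    rw [hy0, map_zero]
  -- counts
  have hcardVS : Fintype.card {x // x ∈ S} = S.card := Fintype.card_coe S
  have hLpos : 1 ≤ L.card := Finset.card_pos.mpr ⟨u, huL⟩
  have hcount : ∀ (P : {x // x ∈ S} → Prop) [DecidablePred P],
      (Finset.univ.filter P).card + (Finset.univ.filter fun i => ¬ P i).card = S.card := by
    intro P _
    rw [Finset.card_filter_add_card_filter_not]
    simpa using hcardVS
  -- generic: finrank of mapped spans
  have hfam_rank : ∀ (ε : ℝ) (P : {x // x ∈ S} → Prop) (_ : DecidablePred P),
      Module.finrank ℝ (Submodule.map (φ : (V → ℝ) →ₗ[ℝ] (V → ℝ))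
        (Submodule.span ℝ (Set.range (famF S B hB u w ε P))))
      = (Finset.univ.filter P).card + 1 := by
    intro ε P hP
    rw [LinearEquiv.finrank_map_eq]
    rw [finrank_span_eq_card (famF_li huS hwS huw)]
    simp [Fintype.card_sum, Fintype.card_subtype]
  have hgam_rank : ∀ (ε : ℝ) (P : {x // x ∈ S} → Prop) (_ : DecidablePred P),
      Module.finrank ℝ (Submodule.map (φ : (V → ℝ) →ₗ[ℝ] (V → ℝ))
        (Submodule.span ℝ (Set.range (gamF S B hB u w L ε P))))
      = (Finset.univ.filter P).card + (L.card - 1) + 1 := by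
    intro ε P hP
    rw [LinearEquiv.finrank_map_eq]
    rw [finrank_span_eq_card (gamF_li huS hwS huw hLS hwL)]
    have h1 : Fintype.card {l // l ∈ L.erase u} = L.card - 1 := by
      rw [Fintype.card_coe, Finset.card_erase_of_mem huL]
    rw [Fintype.card_sum, Fintype.card_sum, h1, Fintype.card_unit]
    simp only [Fintype.card_subtype]
    have he : #(filter (fun x => P x) univ) = #(filter P univ) := rfl
    rw [he]
    omega
  have hmem_fam : ∀ (ε : ℝ) (P : {x // x ∈ S} → Prop) (_ : DecidablePred P) (x : V → ℝ),
      x ∈ Submodule.map (φ : (V → ℝ) →ₗ[ℝ] (V → ℝ))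
        (Submodule.span ℝ (Set.range (famF S B hB u w ε P))) →
      ∃ ξ t, ξ ∈ eigSpan B hB P ∧ quad A x = quad B ξ + 2 * (ε * t) * t ∧
        (x ≠ 0 → ¬ (ξ = 0 ∧ t = 0)) := by
    intro ε P hP x hx
    obtain ⟨z, hzmem, hzx⟩ := Submodule.mem_map.mp hx
    obtain ⟨ξ, t, hξ, hres, hzu, hzw, h0⟩ := famF_decomp huS hwS huw hzmem
    have hzx' : φ z = x := hzx
    refine ⟨ξ, t, hξ, ?_, ?_⟩
    · have h2 := hq z
      rw [hzx'] at h2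
      rw [hres, hzu, hzw] at h2
      exact h2
    · rintro hxne ⟨h1, h2⟩
      apply hxne
      rw [← hzx', h0 h1 h2, map_zero]
  have hmem_gam : ∀ (ε : ℝ) (P : {x // x ∈ S} → Prop) (_ : DecidablePred P) (x : V → ℝ),
      x ∈ Submodule.map (φ : (V → ℝ) →ₗ[ℝ] (V → ℝ))
        (Submodule.span ℝ (Set.range (gamF S B hB u w L ε P))) →
      ∃ ξ t, ξ ∈ eigSpan B hB P ∧ quad A x = quad B ξ + 2 * (ε * t) * t := by
    intro ε P hP x hx
    obtain ⟨z, hzmem, hzx⟩ := Submodule.mem_map.mp hx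
    obtain ⟨ξ, t, hξ, hres, hzu, hzw⟩ := gamF_decomp huS hwS huw hLS hwL hzmem
    have hzx' : φ z = x := hzx
    refine ⟨ξ, t, hξ, ?_⟩
    have h2 := hq z
    rw [hzx'] at h2
    rw [hres, hzu, hzw] at h2
    exact h2
  have hquad0 : ∀ (M : Matrix {x // x ∈ S} {x // x ∈ S} ℝ), quad M (0 : {x // x ∈ S} → ℝ) = 0 := by
    intro M
    simp [quad]
  constructor
  · have hpos := posCount_eq_of_subspaces A hA
      (W := Submodule.map (φ : (V → ℝ) →ₗ[ℝ] (V → ℝ))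
        (Submodule.span ℝ (Set.range (famF S B hB u w 1 (fun i => 0 < hB.eigenvalues i)))))
      (U := Submodule.map (φ : (V → ℝ) →ₗ[ℝ] (V → ℝ))
        (Submodule.span ℝ (Set.range (gamF S B hB u w L (-1) (fun i => ¬ 0 < hB.eigenvalues i)))))
      ?_ ?_ ?_
    · rw [hpos, hfam_rank 1 _ _]
    · intro x hx hx0
      obtain ⟨ξ, t, hξ, hquad, hnz⟩ := hmem_fam 1 _ inferInstance x hx
      rw [hquad]
      by_cases h0 : ξ = 0
      · have ht : t ≠ 0 := fun ht0 => hnz hx0 ⟨h0, ht0⟩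
        rw [h0, hquad0]
        have htt : 0 < t * t := mul_self_pos.mpr ht
        nlinarith
      · have := quad_pos_eigSpan B hB hξ h0
        nlinarith [sq_nonneg t]
    · intro x hx
      obtain ⟨ξ, t, hξ, hquad⟩ := hmem_gam (-1) _ inferInstance x hx
      rw [hquad]
      have := quad_nonpos_eigSpan B hB hξ
      nlinarith [sq_nonneg t]
    · rw [hfam_rank 1 _ inferInstance, hgam_rank (-1) _ inferInstance]
      have := hcount (fun i => 0 < hB.eigenvalues i)
      omega
  · have hneg := negCount_eq_of_subspaces A hA
      (W := Submodule.map (φ : (V → ℝ) →ₗ[ℝ] (V → ℝ))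
        (Submodule.span ℝ (Set.range (famF S B hB u w (-1) (fun i => hB.eigenvalues i < 0)))))
      (U := Submodule.map (φ : (V → ℝ) →ₗ[ℝ] (V → ℝ))
        (Submodule.span ℝ (Set.range (gamF S B hB u w L 1 (fun i => ¬ hB.eigenvalues i < 0)))))
      ?_ ?_ ?_
    · rw [hneg, hfam_rank (-1) _ inferInstance]
    · intro x hx hx0
      obtain ⟨ξ, t, hξ, hquad, hnz⟩ := hmem_fam (-1) _ inferInstance x hx
      rw [hquad]
      by_cases h0 : ξ = 0
      · have ht : t ≠ 0 := fun ht0 => hnz hx0 ⟨h0, ht0⟩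
        rw [h0, hquad0]
        have htt : 0 < t * t := mul_self_pos.mpr ht
        nlinarith
      · have := quad_neg_eigSpan B hB hξ h0
        nlinarith [sq_nonneg t]
    · intro x hx
      obtain ⟨ξ, t, hξ, hquad⟩ := hmem_gam 1 _ inferInstance x hx
      rw [hquad]
      have := quad_nonneg_eigSpan B hB hξ
      nlinarith [sq_nonneg t]
    · rw [hfam_rank (-1) _ inferInstance, hgam_rank 1 _ inferInstance]
      have := hcount (fun i => hB.eigenvalues i < 0)
      omega
end Grand

end InertiaAux

/-- joining a vertex of a signed cycle to the center of a star `K_(1,r)`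
increases both inertia indices by exactly one. -/
theorem inertia_cycle_join_star {V : Type*} [Fintype V] [DecidableEq V] (Γ : SignedGraph V) (g : ℕ)
    (v₀ : V) (c : Γ.G.Walk v₀ v₀) (hc : c.IsCycle) (hlen : c.length = g)
    (w : V) (hw : w ∉ c.support)
    (L : Finset V) (hL : L.Nonempty) (hLc : ∀ x ∈ L, x ∉ c.support) (hwL : w ∉ L)
    (y₀ : V) (hy₀ : y₀ ∈ c.support)
    (hcover : ∀ x : V, x ∈ c.support ∨ x = w ∨ x ∈ L)
    (hE : ∀ a b : V, Γ.G.Adj a b ↔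
      (s(a, b) ∈ c.edges ∨ (a = w ∧ b ∈ L) ∨ (b = w ∧ a ∈ L) ∨
        (a = y₀ ∧ b = w) ∨ (a = w ∧ b = y₀))) :
    Γ.negInertia = (Γ.inducedOn c.support.toFinset).negInertia + 1 ∧
      Γ.posInertia = (Γ.inducedOn c.support.toFinset).posInertia + 1 := by
  classical
  obtain ⟨u, huL⟩ := hL
  set S : Finset V := c.support.toFinset with hS
  have memS : ∀ a : V, a ∈ S ↔ a ∈ c.support := fun a => List.mem_toFinset
  have hwS : w ∉ S := fun h => hw ((memS w).mp h)
  have hLS : ∀ l ∈ L, l ∉ S := fun l hl h => hLc l hl ((memS l).mp h)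
  have huS : u ∉ S := hLS u huL
  have hy₀S : y₀ ∈ S := (memS y₀).mpr hy₀
  set A := Γ.adjMatrix with hA'
  set B := (Γ.inducedOn S).adjMatrix with hB'
  have hBA : ∀ (i j : {x // x ∈ S}), B i j = A ↑i ↑j := fun i j => rfl
  -- adjacency helper lemmas
  have nLL : ∀ a ∈ L, ∀ b ∈ L, ¬ Γ.G.Adj a b := by
    intro a ha b hb h
    rcases (hE a b).mp h with h' | ⟨h1, h2⟩ | ⟨h1, h2⟩ | ⟨h1, h2⟩ | ⟨h1, h2⟩
    · exact hLc a ha (c.fst_mem_support_of_mem_edges h')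
    · exact hwL (h1 ▸ ha)
    · exact hwL (h1 ▸ hb)
    · exact hLc a ha (h1 ▸ hy₀)
    · exact hwL (h1 ▸ ha)
  have nSL : ∀ a ∈ S, ∀ b ∈ L, ¬ Γ.G.Adj a b := by
    intro a ha b hb h
    rcases (hE a b).mp h with h' | ⟨h1, h2⟩ | ⟨h1, h2⟩ | ⟨h1, h2⟩ | ⟨h1, h2⟩
    · exact hLS b hb ((memS b).mpr (c.snd_mem_support_of_mem_edges h'))
    · exact hwS (h1 ▸ ha)
    · exact hwL (h1 ▸ hb)
    · exact hwL (h2 ▸ hb)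
    · exact hwS (h1 ▸ ha)
  have nSw : ∀ a ∈ S, a ≠ y₀ → ¬ Γ.G.Adj a w := by
    intro a ha hay h
    rcases (hE a w).mp h with h' | ⟨h1, h2⟩ | ⟨h1, h2⟩ | ⟨h1, h2⟩ | ⟨h1, h2⟩
    · exact hw (c.snd_mem_support_of_mem_edges h')
    · exact hwS (h1 ▸ ha)
    · exact hLS a h2 ha
    · exact hay h1
    · exact hwS (h1 ▸ ha)
  have nww : ¬ Γ.G.Adj w w := Γ.G.irrefl
  have aWL : ∀ l ∈ L, Γ.G.Adj w l := fun l hl => (hE w l).mpr (Or.inr (Or.inl ⟨rfl, hl⟩))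
  have aWy₀ : Γ.G.Adj w y₀ := (hE w y₀).mpr (Or.inr (Or.inr (Or.inr (Or.inr ⟨rfl, rfl⟩))))
  have ay₀W : Γ.G.Adj y₀ w := (hE y₀ w).mpr (Or.inr (Or.inr (Or.inr (Or.inl ⟨rfl, rfl⟩))))
  -- entries
  have hA0 : ∀ {a b : V}, ¬ Γ.G.Adj a b → A a b = 0 := by
    intro a b h
    simp [hA', SignedGraph.adjMatrix, h]
  have hAval : ∀ {a b : V}, Γ.G.Adj a b → A a b = Γ.sign a b := by
    intro a b h
    simp [hA', SignedGraph.adjMatrix, h]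
  -- sign
  have hσu : Γ.sign w u * Γ.sign w u = 1 := by
    rcases Γ.sign_pm w u (aWL u huL) with h | h <;> rw [h] <;> norm_num
  -- cardinality
  have hdisj : Disjoint S (insert w L) := by
    rw [Finset.disjoint_left]
    intro a ha hmem
    rcases Finset.mem_insert.mp hmem with rfl | h
    · exact hwS ha
    · exact hLS a h ha
  have huniv : (Finset.univ : Finset V) = S ∪ insert w L := by
    ext a
    simp only [Finset.mem_univ, true_iff, Finset.mem_union, Finset.mem_insert]
    rcases hcover a with h | h | h
    · exact Or.inl ((memS a).mpr h)
    · exact Or.inr (Or.inl h)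
    · exact Or.inr (Or.inr h)
  have hcard : Fintype.card V = S.card + L.card + 1 := by
    rw [← Finset.card_univ, huniv, Finset.card_union_of_disjoint hdisj,
      Finset.card_insert_of_notMem hwL]
    ring
  -- the key quadratic identity
  have hkey : ∀ x : V → ℝ, quad A x
      = quad B (resS S x) + 2 * x w * ((∑ l ∈ L, Γ.sign w l * x l) + Γ.sign w y₀ * x y₀) := by
    intro x
    set F : V → V → ℝ := fun a b => x a * (A a b * x b) with hF
    have hsplit : ∀ f : V → ℝ, ∑ a, f a = (∑ a ∈ S, f a) + (∑ a ∈ insert w L, f a) := by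
      intro f
      rw [← Finset.sum_union hdisj, ← huniv]
    have hqA : quad A x = ∑ a, ∑ b, F a b := by
      simp only [quad, dotProduct, mulVec, Finset.mul_sum, hF]
    have hqB : quad B (resS S x) = ∑ i : {y // y ∈ S}, ∑ j : {y // y ∈ S}, F ↑i ↑j := by
      simp only [quad, dotProduct, mulVec, Finset.mul_sum, hF]
      rfl
    -- pieces
    have hinner : ∀ a, ∑ b, F a b = (∑ b ∈ S, F a b) + (∑ b ∈ insert w L, F a b) :=
      fun a => hsplit (F a)
    have P1 : quad B (resS S x) = ∑ a ∈ S, ∑ b ∈ S, F a b := by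
      rw [hqB]
      rw [show (∑ i : {y // y ∈ S}, ∑ j : {y // y ∈ S}, F ↑i ↑j)
          = ∑ i : {y // y ∈ S}, ∑ b ∈ S, F ↑i b from
        Finset.sum_congr rfl fun i _ => Finset.sum_coe_sort S (F ↑i)]
      exact Finset.sum_coe_sort S (fun a => ∑ b ∈ S, F a b)
    have hF0 : ∀ {a b : V}, ¬ Γ.G.Adj a b → F a b = 0 := by
      intro a b h
      simp [hF, hA0 h]
    have P2 : (∑ a ∈ S, ∑ b ∈ insert w L, F a b) = F y₀ w := by
      rw [Finset.sum_eq_single_of_mem y₀ hy₀S]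
      · rw [Finset.sum_insert hwL, Finset.sum_eq_zero (fun l hl => hF0 (nSL y₀ hy₀S l hl)),
          add_zero]
      · intro a ha hay
        rw [Finset.sum_insert hwL, hF0 (nSw a ha hay),
          Finset.sum_eq_zero (fun l hl => hF0 (nSL a ha l hl)), add_zero]
    have P3 : (∑ a ∈ insert w L, ∑ b ∈ S, F a b) = F w y₀ := by
      rw [Finset.sum_insert hwL]
      have h1 : (∑ b ∈ S, F w b) = F w y₀ := by
        rw [Finset.sum_eq_single_of_mem y₀ hy₀S]
        intro b hb hby
        exact hF0 (fun h => nSw b hb hby h.symm)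
      have h2 : (∑ a ∈ L, ∑ b ∈ S, F a b) = 0 := by
        refine Finset.sum_eq_zero fun a ha => Finset.sum_eq_zero fun b hb => ?_
        exact hF0 (fun h => nSL b hb a ha h.symm)
      rw [h1, h2, add_zero]
    have P4 : (∑ a ∈ insert w L, ∑ b ∈ insert w L, F a b)
        = (∑ l ∈ L, F w l) + (∑ l ∈ L, F l w) := by
      rw [Finset.sum_insert hwL, Finset.sum_insert hwL, hF0 nww, zero_add]
      congr 1
      refine Finset.sum_congr rfl fun a ha => ?_
      rw [Finset.sum_insert hwL, Finset.sum_eq_zero (fun b hb => hF0 (nLL a ha b hb)), add_zero]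
    have hFwl : ∀ l ∈ L, F w l = x w * (Γ.sign w l * x l) := by
      intro l hl
      simp only [hF]
      rw [hAval (aWL l hl)]
    have hFlw : ∀ l ∈ L, F l w = x l * (Γ.sign w l * x w) := by
      intro l hl
      simp only [hF]
      rw [hAval (Γ.G.adj_symm (aWL l hl)), Γ.sign_symm l w]
    have hFy₀w : F y₀ w = x y₀ * (Γ.sign w y₀ * x w) := by
      simp only [hF]
      rw [hAval ay₀W, Γ.sign_symm y₀ w]
    have hFwy₀ : F w y₀ = x w * (Γ.sign w y₀ * x y₀) := by
      simp only [hF]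
      rw [hAval aWy₀]
    calc quad A x = ∑ a, ∑ b, F a b := hqA
      _ = (∑ a ∈ S, ∑ b, F a b) + (∑ a ∈ insert w L, ∑ b, F a b) :=
          hsplit (fun a => ∑ b, F a b)
      _ = ((∑ a ∈ S, ∑ b ∈ S, F a b) + (∑ a ∈ S, ∑ b ∈ insert w L, F a b))
          + ((∑ a ∈ insert w L, ∑ b ∈ S, F a b)
            + (∑ a ∈ insert w L, ∑ b ∈ insert w L, F a b)) := by
          rw [← Finset.sum_add_distrib, ← Finset.sum_add_distrib]
          congr 1 <;> exact Finset.sum_congr rfl fun a _ => hinner a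
      _ = quad B (resS S x) + 2 * x w * ((∑ l ∈ L, Γ.sign w l * x l) + Γ.sign w y₀ * x y₀) := by
          rw [← P1, P2, P3, P4, hFy₀w, hFwy₀,
            Finset.sum_congr rfl hFwl, Finset.sum_congr rfl hFlw]
          rw [← Finset.sum_add_distrib]
          have hterm : ∀ l ∈ L, x w * (Γ.sign w l * x l) + x l * (Γ.sign w l * x w)
              = 2 * x w * (Γ.sign w l * x l) := fun l _ => by ring
          rw [Finset.sum_congr rfl hterm, mul_add, Finset.mul_sum]
          ring
  have main := inertia_step A Γ.isHermitian B (Γ.inducedOn S).isHermitian u w y₀ L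
    (Γ.sign w) (Γ.sign w y₀) huL hwL huS hwS hy₀S hLS hσu hcard hkey
  constructor
  · exact main.2
  · exact main.1
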